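/- Let X be a finite metric space and ≤ a linear order on the nonempty subsets of X extending the face relation (σ ⊆ τ implies σ ≤ τ) and refining the diameter order (diam σ < diam τ implies σ < τ). If τ ⊆ X is a subset with |τ| ≥ 3 and σ is the maximum, with respect to ≤, among the facets of τ, then diam σ = diam τ. -/
import Mathlib


/-- The diameter of a finite subset of a metric space. -/
noncomputable def fdiam {X : Type*} [MetricSpace X] (S : Finset X) : ℝ :=
  Metric.diam (S : Set X)

lemma fdiam_mono {X : Type*} [MetricSpace X] {S T : Finset X} (h : S ⊆ T) :
    fdiam S ≤ fdiam T :=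
  Metric.diam_mono (by exact_mod_cast h) (T.finite_toSet.isBounded)

lemma fdiam_exists {X : Type*} [MetricSpace X] {S : Finset X} (hS : S.Nonempty) :
    ∃ x ∈ S, ∃ y ∈ S, fdiam S = dist x y := by
  have hne : (S ×ˢ S).Nonempty := hS.product hS
  obtain ⟨p, hp, hpeq⟩ := Finset.exists_mem_eq_sup' hne (fun p => dist p.1 p.2)
  rw [Finset.mem_product] at hp
  refine ⟨p.1, hp.1, p.2, hp.2, le_antisymm ?_ ?_⟩
  · have : ∀ x ∈ S, ∀ y ∈ S, dist x y ≤ dist p.1 p.2 := by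
      intro x hx y hy
      have h2 := Finset.le_sup' (f := fun p : X × X => dist p.1 p.2)
        (by rw [Finset.mem_product]; exact ⟨hx, hy⟩ : (x, y) ∈ S ×ˢ S)
      rw [hpeq] at h2
      exact h2
    exact Metric.diam_le_of_forall_dist_le (by
      simpa using this p.1 hp.1 p.1 hp.1) (fun x hx y hy => this x hx y hy)
  · exact Metric.dist_le_diam_of_mem S.finite_toSet.isBounded hp.1 hp.2

/-- In a simplexwise refinement of the Vietoris–Rips filtration (a linear order
on the nonempty subsets of a finite metric space extending the face relation
and refining the diameter order), if `|τ| ≥ 3` and `σ` is the maximum facet of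
`τ`, then `diam σ = diam τ`. -/
theorem stmt10 {X : Type*} [Fintype X] [MetricSpace X]
    (le : Finset X → Finset X → Prop)
    (hrefl : ∀ σ : Finset X, σ.Nonempty → le σ σ)
    (htrans : ∀ σ τ ρ : Finset X, σ.Nonempty → τ.Nonempty → ρ.Nonempty →
      le σ τ → le τ ρ → le σ ρ)
    (hantisymm : ∀ σ τ : Finset X, σ.Nonempty → τ.Nonempty → le σ τ → le τ σ → σ = τ)
    (htotal : ∀ σ τ : Finset X, σ.Nonempty → τ.Nonempty → le σ τ ∨ le τ σ)
    (hface : ∀ σ τ : Finset X, σ.Nonempty → τ.Nonempty → σ ⊆ τ → le σ τ)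
    (hdiam : ∀ σ τ : Finset X, σ.Nonempty → τ.Nonempty →
      fdiam σ < fdiam τ → le σ τ ∧ ¬ le τ σ)
    (τ σ : Finset X) (hτ : 3 ≤ τ.card) (hσ : σ.Nonempty)
    (hfacet : σ ⊆ τ ∧ τ.card = σ.card + 1)
    (hmax : ∀ σ' : Finset X, σ'.Nonempty → σ' ⊆ τ → τ.card = σ'.card + 1 → le σ' σ) :
    fdiam σ = fdiam τ := by
  classical
  have hτne : τ.Nonempty := Finset.card_pos.mp (by omega)
  obtain ⟨x, hx, y, hy, hxy⟩ := fdiam_exists hτne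
  -- find z ∈ τ, z ≠ x, z ≠ y
  have : ∃ z ∈ τ, z ≠ x ∧ z ≠ y := by
    by_contra h
    push_neg at h
    have hsub : τ ⊆ ({x, y} : Finset X) := by
      intro w hw
      rcases eq_or_ne w x with h1 | h1
      · simp [h1]
      · simp [h w hw h1]
    have h2 := Finset.card_le_card hsub
    have h3 : ({x, y} : Finset X).card ≤ 2 :=
      (Finset.card_insert_le _ _).trans (by simp)
    omega
  obtain ⟨z, hz, hzx, hzy⟩ := this
  set σ' := τ.erase z with hσ'def
  have hsub : σ' ⊆ τ := Finset.erase_subset _ _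
  have hxσ' : x ∈ σ' := Finset.mem_erase.mpr ⟨fun h => hzx h.symm, hx⟩
  have hyσ' : y ∈ σ' := Finset.mem_erase.mpr ⟨fun h => hzy h.symm, hy⟩
  have hσ'ne : σ'.Nonempty := ⟨x, hxσ'⟩
  have hcard : τ.card = σ'.card + 1 := by
    rw [hσ'def, Finset.card_erase_of_mem hz]; omega
  have hle : le σ' σ := hmax σ' hσ'ne hsub hcard
  have hd1 : fdiam σ' = fdiam τ := by
    refine le_antisymm (fdiam_mono hsub) ?_
    rw [hxy]
    exact Metric.dist_le_diam_of_mem σ'.finite_toSet.isBounded hxσ' hyσ'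
  have hd2 : fdiam σ' ≤ fdiam σ := by
    by_contra h
    push_neg at h
    exact (hdiam σ σ' hσ hσ'ne h).2 hle
  have hd3 : fdiam σ ≤ fdiam τ := fdiam_mono hfacet.1
  linarith [hd1, hd2, hd3]
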